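/- Let L ∈ ℝ^{n×n} be symmetric positive definite, let c ∈ ℝ^n, F ∈ ℝ^{m×n}, l, ū ∈ ℝ^m, δU ≥ 0, and define the affine controller κ(x) = K(x − c) + l with K = F L⁻¹. Then κ maps the ellipsoid E(c, L⁻²) into the Euclidean closed ball of radius √δU centered at ū if and only if there exists φ ≥ 0 such that the block matrix [[φ·I_n, 0, Fᵀ],[0, δU − φ, (l − ū)ᵀ],[F, l − ū, I_m]] is positive semidefinite. -/

import Mathlib

set_option maxHeartbeats 1000000

open Matrix Filter

noncomputable section

/-- Euclidean norm on `Fin k → ℝ`. -/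
def eunorm {k : ℕ} (v : Fin k → ℝ) : ℝ := Real.sqrt (∑ i, v i ^ 2)

/-- Ellipsoid `E(c, P) = {x : (x−c)ᵀ P (x−c) ≤ 1}`. -/
def Ellip {n : ℕ} (c : Fin n → ℝ) (P : Matrix (Fin n) (Fin n) ℝ) : Set (Fin n → ℝ) :=
  {x | (x - c) ⬝ᵥ P.mulVec (x - c) ≤ 1}

/-- A vector as a single-row matrix. -/
def rowV {m : ℕ} (v : Fin m → ℝ) : Matrix (Fin 1) (Fin m) ℝ := Matrix.of fun _ j => v j

/-- A vector as a single-column matrix. -/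
def colV {m : ℕ} (v : Fin m → ℝ) : Matrix (Fin m) (Fin 1) ℝ := Matrix.of fun i _ => v i

/-- A scalar as a 1×1 matrix. -/
def sc (a : ℝ) : Matrix (Fin 1) (Fin 1) ℝ := Matrix.of fun _ _ => a

/-- 3×3 block matrix. -/
def block3 {n1 n2 n3 : Type*}
    (A11 : Matrix n1 n1 ℝ) (A12 : Matrix n1 n2 ℝ) (A13 : Matrix n1 n3 ℝ)
    (A21 : Matrix n2 n1 ℝ) (A22 : Matrix n2 n2 ℝ) (A23 : Matrix n2 n3 ℝ)
    (A31 : Matrix n3 n1 ℝ) (A32 : Matrix n3 n2 ℝ) (A33 : Matrix n3 n3 ℝ) :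
    Matrix ((n1 ⊕ n2) ⊕ n3) ((n1 ⊕ n2) ⊕ n3) ℝ :=
  fromBlocks (fromBlocks A11 A12 A21 A22) (fromRows A13 A23) (fromCols A31 A32) A33


lemma nonneg_at_zero_of_pos (f : ℝ → ℝ) (hf : Continuous f) (h : ∀ s > 0, 0 ≤ f s) : 0 ≤ f 0 :=
  ge_of_tendsto ((hf.tendsto 0).mono_left (nhdsWithin_le_nhds (s := Set.Ioi (0:ℝ))))
    (eventually_nhdsWithin_of_forall (fun s hs => h s hs))

lemma dself {k : ℕ} (v : Fin k → ℝ) : 0 ≤ v ⬝ᵥ v :=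
  Finset.sum_nonneg fun i _ => mul_self_nonneg _

lemma slemma {n m : ℕ} (F : Matrix (Fin m) (Fin n) ℝ) (d : Fin m → ℝ) (δU : ℝ)
    (h : ∀ y : Fin n → ℝ, y ⬝ᵥ y ≤ 1 → (F *ᵥ y + d) ⬝ᵥ (F *ᵥ y + d) ≤ δU) :
    ∃ φ : ℝ, 0 ≤ φ ∧ ∀ (y : Fin n → ℝ) (t : ℝ),
      (F *ᵥ y + t • d) ⬝ᵥ (F *ᵥ y + t • d) ≤ φ * (y ⬝ᵥ y) + (δU - φ) * t ^ 2 := by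
  rcases Nat.eq_zero_or_pos n with hn | hn
  · refine ⟨0, le_refl _, fun y t => ?_⟩
    have hy0 : y = 0 := by subst hn; exact Subsingleton.elim y 0
    have hd : d ⬝ᵥ d ≤ δU := by have := h 0 (by simp); simpa using this
    subst hy0
    simp only [mulVec_zero, zero_add, dotProduct_smul, smul_dotProduct, smul_eq_mul,
      dotProduct_zero, mul_zero, zero_sub, sub_zero, zero_mul]
    nlinarith [sq_nonneg t, dself d]
  · set g : (Fin n → ℝ) → ℝ := fun y => (F *ᵥ y + d) ⬝ᵥ (F *ᵥ y + d) with hgdef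
    set S : Set (Fin n → ℝ) := {y | y ⬝ᵥ y = 1} with hSdef
    have hdotcont : Continuous fun y : Fin n → ℝ => y ⬝ᵥ y := by
      simp only [dotProduct]; fun_prop
    have hSclosed : IsClosed S := isClosed_eq hdotcont continuous_const
    have hSsub : S ⊆ Metric.closedBall 0 1 := by
      intro y hy
      simp only [Metric.mem_closedBall, dist_zero_right]
      rw [pi_norm_le_iff_of_nonneg zero_le_one]
      intro i
      have h1 : y i * y i ≤ y ⬝ᵥ y :=
        Finset.single_le_sum (f := fun j => y j * y j) (fun j _ => mul_self_nonneg _)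
          (Finset.mem_univ i)
      rw [Real.norm_eq_abs, abs_le_one_iff_mul_self_le_one]
      rw [Set.mem_setOf_eq] at hy
      linarith [hy ▸ h1]
    have hScompact : IsCompact S :=
      (isCompact_closedBall 0 1).of_isClosed_subset hSclosed hSsub
    have hSne : S.Nonempty := by
      refine ⟨Pi.single (⟨0, hn⟩ : Fin n) (1:ℝ), ?_⟩
      simp [hSdef, dotProduct, Pi.single_apply]
    have hgcont : Continuous g := by
      simp only [hgdef, mulVec, dotProduct, Pi.add_apply]; fun_prop
    obtain ⟨y0, hy0S, hy0max⟩ := hScompact.exists_isMaxOn hSne hgcont.continuousOn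
    have hy0 : y0 ⬝ᵥ y0 = 1 := hy0S
    set q : Fin m → ℝ := F *ᵥ y0 with hq
    set p : Fin m → ℝ := q + d with hp
    have hexp : ∀ y ∈ S, (F *ᵥ y) ⬝ᵥ (F *ᵥ y) + 2 * (d ⬝ᵥ (F *ᵥ y)) ≤ q ⬝ᵥ q + 2 * (d ⬝ᵥ q) := by
      intro y hy
      have h2 := hy0max hy
      simp only [hgdef, Set.mem_setOf_eq, dotProduct_add, add_dotProduct, ← hq] at h2
      rw [dotProduct_comm (F *ᵥ y) d, dotProduct_comm q d] at h2
      linarith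
    set φ : ℝ := q ⬝ᵥ p with hφdef
    have hqd : 0 ≤ d ⬝ᵥ q := by
      have hmem : (-y0) ∈ S := by
        simp only [hSdef, Set.mem_setOf_eq, neg_dotProduct, dotProduct_neg, neg_neg, hy0]
      have h2 := hexp _ hmem
      rw [mulVec_neg, ← hq] at h2
      simp only [neg_dotProduct, dotProduct_neg, neg_neg] at h2
      linarith
    have hφeq : φ = q ⬝ᵥ q + d ⬝ᵥ q := by
      rw [hφdef, hp, dotProduct_add, dotProduct_comm q d]
    have hφ : 0 ≤ φ := by rw [hφeq]; linarith [dself q]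
    have hTp : ∀ v : Fin n → ℝ, p ⬝ᵥ (F *ᵥ v) = (Fᵀ *ᵥ p) ⬝ᵥ v := fun v => by
      rw [dotProduct_mulVec, ← mulVec_transpose]
    set w : Fin n → ℝ := Fᵀ *ᵥ p - φ • y0 with hwdef
    have hwy : w ⬝ᵥ y0 = 0 := by
      have h1 : (Fᵀ *ᵥ p) ⬝ᵥ y0 = φ := by
        rw [← hTp y0, ← hq, dotProduct_comm p q, hφdef]
      simp only [hwdef, sub_dotProduct, smul_dotProduct, smul_eq_mul, h1, hy0, mul_one, sub_self]
    -- homogeneous form of maximality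
    have hexpH : ∀ (Y : Fin n → ℝ) (τ : ℝ), 0 < τ → Y ⬝ᵥ Y = τ^2 →
        (F *ᵥ Y) ⬝ᵥ (F *ᵥ Y) + 2 * τ * (d ⬝ᵥ (F *ᵥ Y)) ≤ τ^2 * (q ⬝ᵥ q + 2 * (d ⬝ᵥ q)) := by
      intro Y τ hτ hY
      have hτ' : τ ≠ 0 := hτ.ne'
      have hmem : (τ⁻¹ • Y) ∈ S := by
        simp only [hSdef, Set.mem_setOf_eq, smul_dotProduct, dotProduct_smul, smul_eq_mul, hY]
        field_simp
      have h2 := hexp _ hmem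
      rw [mulVec_smul] at h2
      simp only [dotProduct_smul, smul_dotProduct, smul_eq_mul] at h2
      have h3 := mul_le_mul_of_nonneg_left h2 (sq_nonneg τ)
      have e1 : τ^2 * (τ⁻¹ * (τ⁻¹ * ((F *ᵥ Y) ⬝ᵥ (F *ᵥ Y))) + 2 * (τ⁻¹ * (d ⬝ᵥ (F *ᵥ Y)))) =
          (F *ᵥ Y) ⬝ᵥ (F *ᵥ Y) + 2 * τ * (d ⬝ᵥ (F *ᵥ Y)) := by
        field_simp
      rw [e1] at h3
      exact h3
    -- Lagrange condition: w = 0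
    have hw0 : w = 0 := by
      by_contra hw
      have hc2 : 0 < w ⬝ᵥ w :=
        lt_of_le_of_ne (dself w) (fun hcon => hw (dotProduct_self_eq_zero.mp hcon.symm))
      set σ : ℝ := Real.sqrt (w ⬝ᵥ w) with hσdef
      have hσ : 0 < σ := Real.sqrt_pos.mpr hc2
      have hσ2 : σ^2 = w ⬝ᵥ w := Real.sq_sqrt hc2.le
      set u : Fin n → ℝ := σ⁻¹ • w with hudef
      have huu : u ⬝ᵥ u = 1 := by
        simp only [hudef, smul_dotProduct, dotProduct_smul, smul_eq_mul]
        rw [← hσ2]; field_simp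
      have huy : u ⬝ᵥ y0 = 0 := by
        simp only [hudef, smul_dotProduct, smul_eq_mul, hwy, mul_zero]
      have hyu : y0 ⬝ᵥ u = 0 := by rw [dotProduct_comm]; exact huy
      set r : Fin m → ℝ := F *ᵥ u with hr
      have hpr : q ⬝ᵥ r + d ⬝ᵥ r = σ := by
        have h1 : p ⬝ᵥ r = (w + φ • y0) ⬝ᵥ u := by
          rw [hr, hTp u, hwdef, sub_add_cancel]
        have h2 : (w + φ • y0) ⬝ᵥ u = σ := by
          rw [add_dotProduct, smul_dotProduct]
          simp only [smul_eq_mul, dotProduct_comm y0 u, huy, mul_zero, add_zero]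
          rw [hudef, dotProduct_smul, smul_eq_mul, ← hσ2]
          field_simp
        have h3 : p ⬝ᵥ r = q ⬝ᵥ r + d ⬝ᵥ r := by rw [hp, add_dotProduct]
        rw [← h3, h1, h2]
      -- circle through y0 in direction u
      have hkey : ∀ s : ℝ, 0 < s →
          0 ≤ s * (q ⬝ᵥ q) + s * (1+s^2) * (d ⬝ᵥ q) - (1-s^2) * (q ⬝ᵥ r) - s * (r ⬝ᵥ r)
              - (1+s^2) * (d ⬝ᵥ r) := by
        intro s hs
        have h1 : (0:ℝ) < 1 + s^2 := by positivity
        have hY : ((1-s^2) • y0 + (2*s) • u) ⬝ᵥ ((1-s^2) • y0 + (2*s) • u) = (1+s^2)^2 := by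
          simp only [dotProduct_add, add_dotProduct, dotProduct_smul, smul_dotProduct,
            smul_eq_mul, hy0, huu, huy, hyu, mul_zero, mul_one, add_zero, zero_add]
          ring
        have h2 := hexpH _ _ h1 hY
        rw [mulVec_add, mulVec_smul, mulVec_smul, ← hq, ← hr] at h2
        simp only [dotProduct_add, add_dotProduct, dotProduct_smul, smul_dotProduct,
          smul_eq_mul] at h2
        rw [dotProduct_comm r q] at h2
        nlinarith [h2]
      set f : ℝ → ℝ := fun s => s * (q ⬝ᵥ q) + s * (1+s^2) * (d ⬝ᵥ q) - (1-s^2) * (q ⬝ᵥ r)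
          - s * (r ⬝ᵥ r) - (1+s^2) * (d ⬝ᵥ r) with hfdef
      have hf0 : 0 ≤ f 0 := by
        apply nonneg_at_zero_of_pos f (by simp only [hfdef]; fun_prop) hkey
      simp only [hfdef] at hf0
      norm_num at hf0
      -- f 0 = -(q⬝r) - (d⬝r) ≥ 0 contradicts hpr : q⬝r + d⬝r = σ > 0
      nlinarith [hf0, hpr, hσ]
    have hFp : Fᵀ *ᵥ p = φ • y0 := by
      have := sub_eq_zero.mp hw0
      exact this
    -- positive semidefiniteness of φ I - Fᵀ F
    have hA : ∀ z : Fin n → ℝ, y0 ⬝ᵥ z ≠ 0 → (F *ᵥ z) ⬝ᵥ (F *ᵥ z) ≤ φ * (z ⬝ᵥ z) := by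
      intro z hz
      have hz0 : z ≠ 0 := by rintro rfl; simp at hz
      have hzz : 0 < z ⬝ᵥ z :=
        lt_of_le_of_ne (dself z) (fun hcon => hz0 (dotProduct_self_eq_zero.mp hcon.symm))
      set a : ℝ := y0 ⬝ᵥ z with hadef
      set sσ : ℝ := -2 * a / (z ⬝ᵥ z) with hsσdef
      have hsσ : sσ ≠ 0 := by
        simp only [hsσdef]
        exact div_ne_zero (by simpa using hz) hzz.ne'
      have hsσzz : sσ * (z ⬝ᵥ z) = -2 * a := by
        rw [hsσdef]; field_simp
      have hmem : (y0 + sσ • z) ∈ S := by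
        simp only [hSdef, Set.mem_setOf_eq, dotProduct_add, add_dotProduct, dotProduct_smul,
          smul_dotProduct, smul_eq_mul, hy0, dotProduct_comm z y0, ← hadef]
        linear_combination sσ * hsσzz
      have h2 := hexp _ hmem
      rw [mulVec_add, mulVec_smul, ← hq] at h2
      simp only [dotProduct_add, add_dotProduct, dotProduct_smul, smul_dotProduct,
        smul_eq_mul] at h2
      rw [dotProduct_comm (F *ᵥ z) q] at h2
      -- p ⬝ᵥ (F *ᵥ z) = φ * (y0 ⬝ᵥ z)
      have hpz : q ⬝ᵥ (F *ᵥ z) + d ⬝ᵥ (F *ᵥ z) = φ * a := by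
        have h3 : p ⬝ᵥ (F *ᵥ z) = φ * a := by
          rw [hTp z, hFp, smul_dotProduct, smul_eq_mul, hadef]
        rw [← h3, hp, add_dotProduct]
      have hσ2pos : 0 < sσ^2 := lt_of_le_of_ne (sq_nonneg _) (Ne.symm (pow_ne_zero 2 hsσ))
      have e1 : 2*sσ*(q ⬝ᵥ (F *ᵥ z)) + 2*sσ*(d ⬝ᵥ (F *ᵥ z)) = 2*sσ*(φ*a) := by
        linear_combination (2*sσ) * hpz
      have e2 : sσ * (sσ * (z ⬝ᵥ z)) * φ = sσ * (-2*a) * φ := by rw [hsσzz]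
      have h6 : sσ^2 * ((F *ᵥ z) ⬝ᵥ (F *ᵥ z)) ≤ sσ^2 * (φ * (z ⬝ᵥ z)) := by
        nlinarith [h2, e1, e2]
      exact le_of_mul_le_mul_left h6 hσ2pos
    have hA' : ∀ z : Fin n → ℝ, (F *ᵥ z) ⬝ᵥ (F *ᵥ z) ≤ φ * (z ⬝ᵥ z) := by
      intro z
      by_cases hz : y0 ⬝ᵥ z = 0
      · set f : ℝ → ℝ := fun ε => φ * ((z + ε • y0) ⬝ᵥ (z + ε • y0))
            - (F *ᵥ (z + ε • y0)) ⬝ᵥ (F *ᵥ (z + ε • y0)) with hfdef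
        have hfs : ∀ ε : ℝ, f ε = φ * ((z ⬝ᵥ z) + 2 * ε * (y0 ⬝ᵥ z) + ε^2)
            - ((F *ᵥ z) ⬝ᵥ (F *ᵥ z) + 2 * ε * (q ⬝ᵥ (F *ᵥ z)) + ε^2 * (q ⬝ᵥ q)) := by
          intro ε
          simp only [hfdef, mulVec_add, mulVec_smul, ← hq, dotProduct_add, add_dotProduct,
            dotProduct_smul, smul_dotProduct, smul_eq_mul, hy0, dotProduct_comm z y0,
            dotProduct_comm (F *ᵥ z) q]
          ring
        have hfpos : ∀ ε > 0, 0 ≤ f ε := by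
          intro ε hε
          have hyz : y0 ⬝ᵥ (z + ε • y0) ≠ 0 := by
            simp only [dotProduct_add, dotProduct_smul, smul_eq_mul, hz, hy0, zero_add, mul_one]
            exact hε.ne'
          have := hA _ hyz
          simp only [hfdef]
          linarith
        have hcont : Continuous f := by
          have : f = fun ε => φ * ((z ⬝ᵥ z) + 2 * ε * (y0 ⬝ᵥ z) + ε^2)
              - ((F *ᵥ z) ⬝ᵥ (F *ᵥ z) + 2 * ε * (q ⬝ᵥ (F *ᵥ z)) + ε^2 * (q ⬝ᵥ q)) :=
            funext hfs
          rw [this]; fun_prop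
        have h0 := nonneg_at_zero_of_pos f hcont hfpos
        rw [hfs 0] at h0
        simp only [hz] at h0
        nlinarith [h0]
      · exact hA z hz
    -- conclusion
    clear hy0max hexp hexpH hA hdotcont hSclosed hSsub hScompact hSne hgcont hy0S hwy hw0
    clear_value g S w q p φ
    clear hwdef w hgdef g hSdef S hφdef
    refine ⟨φ, hφ, fun y t => ?_⟩
    have h1 := hA' (y - t • y0)
    rw [mulVec_sub, mulVec_smul, ← hq] at h1
    have eL : (F *ᵥ y - t • q) ⬝ᵥ (F *ᵥ y - t • q)
        = (F *ᵥ y) ⬝ᵥ (F *ᵥ y) - 2*t*(q ⬝ᵥ (F *ᵥ y)) + t^2*(q ⬝ᵥ q) := by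
      simp only [dotProduct_sub, sub_dotProduct, dotProduct_smul, smul_dotProduct, smul_eq_mul,
        dotProduct_comm (F *ᵥ y) q]
      ring
    have eR : (y - t • y0) ⬝ᵥ (y - t • y0) = (y ⬝ᵥ y) - 2*t*(y0 ⬝ᵥ y) + t^2 := by
      simp only [dotProduct_sub, sub_dotProduct, dotProduct_smul, smul_dotProduct, smul_eq_mul,
        dotProduct_comm y y0, hy0]
      ring
    rw [eL, eR] at h1
    have hδ : q ⬝ᵥ q + 2 * (d ⬝ᵥ q) + d ⬝ᵥ d ≤ δU := by
      have h2 := h y0 (le_of_eq hy0)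
      rw [← hq] at h2
      simp only [dotProduct_add, add_dotProduct, dotProduct_comm q d] at h2
      linarith
    have hpz : q ⬝ᵥ (F *ᵥ y) + d ⬝ᵥ (F *ᵥ y) = φ * (y0 ⬝ᵥ y) := by
      have h3 : p ⬝ᵥ (F *ᵥ y) = φ * (y0 ⬝ᵥ y) := by
        rw [hTp y, hFp, smul_dotProduct, smul_eq_mul]
      rw [← h3, hp, add_dotProduct]
    have ht2 : t^2 * (q ⬝ᵥ q + 2 * (d ⬝ᵥ q) + d ⬝ᵥ d) ≤ t^2 * δU :=
      mul_le_mul_of_nonneg_left hδ (sq_nonneg t)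
    have hgoal : (F *ᵥ y + t • d) ⬝ᵥ (F *ᵥ y + t • d) =
        (F *ᵥ y) ⬝ᵥ (F *ᵥ y) + 2*t*(d ⬝ᵥ (F *ᵥ y)) + t^2*(d ⬝ᵥ d) := by
      simp only [dotProduct_add, add_dotProduct, dotProduct_smul, smul_dotProduct, smul_eq_mul,
        dotProduct_comm (F *ᵥ y) d]
      ring
    rw [hgoal]
    have e3 : 2*t*(q ⬝ᵥ (F *ᵥ y)) + 2*t*(d ⬝ᵥ (F *ᵥ y)) = 2*t*(φ*(y0 ⬝ᵥ y)) := by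
      linear_combination (2*t) * hpz
    have e4 : t^2*φ = t^2*(q ⬝ᵥ q) + t^2*(d ⬝ᵥ q) := by linear_combination t^2 * hφeq
    nlinarith [h1, ht2, e3, e4]

variable {n m : ℕ}

noncomputable def M3 (F : Matrix (Fin m) (Fin n) ℝ) (d : Fin m → ℝ) (δU φ : ℝ) : Matrix ((Fin n ⊕ Fin 1) ⊕ Fin m) ((Fin n ⊕ Fin 1) ⊕ Fin m) ℝ :=
  block3 (φ • (1 : Matrix (Fin n) (Fin n) ℝ)) 0 Fᵀ
         0 (sc (δU - φ)) (rowV d)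
         F (colV d) (1 : Matrix (Fin m) (Fin m) ℝ)

lemma M3_quadform (F : Matrix (Fin m) (Fin n) ℝ) (d : Fin m → ℝ) (δU φ : ℝ) (y : Fin n → ℝ) (t : ℝ) (z : Fin m → ℝ) :
    (Sum.elim (Sum.elim y (fun _ => t)) z) ⬝ᵥ
      (M3 F d δU φ) *ᵥ (Sum.elim (Sum.elim y (fun _ => t)) z)
    = φ * (y ⬝ᵥ y) + (δU - φ) * t^2 + z ⬝ᵥ z + 2 * (z ⬝ᵥ (F *ᵥ y + t • d)) := by
  have hrow : rowV d *ᵥ z = fun _ : Fin 1 => d ⬝ᵥ z := by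
    ext i; simp [rowV, mulVec, dotProduct]
  have hcol : colV d *ᵥ (fun _ : Fin 1 => t) = t • d := by
    ext i; simp [colV, mulVec, dotProduct, mul_comm]
  have hsc : sc (δU - φ) *ᵥ (fun _ : Fin 1 => t) = fun _ : Fin 1 => (δU - φ) * t := by
    ext i; simp [sc, mulVec, dotProduct]
  rw [M3, block3, fromBlocks_mulVec]
  simp only [Sum.elim_comp_inl, Sum.elim_comp_inr]
  rw [fromBlocks_mulVec, fromRows_mulVec, fromCols_mulVec_sumElim]
  simp only [Sum.elim_comp_inl, Sum.elim_comp_inr, Matrix.zero_mulVec, add_zero, zero_add,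
    Matrix.one_mulVec, hrow, hcol, hsc]
  have hsmul : (φ • (1 : Matrix (Fin n) (Fin n) ℝ)) *ᵥ y = φ • y := by
    rw [Matrix.smul_mulVec, Matrix.one_mulVec]
  rw [hsmul]
  have hcomb : (Sum.elim (φ • y) (fun _ : Fin 1 => (δU - φ) * t))
        + (Sum.elim (Fᵀ *ᵥ z) (fun _ : Fin 1 => d ⬝ᵥ z))
      = Sum.elim (φ • y + Fᵀ *ᵥ z) (fun _ : Fin 1 => (δU - φ) * t + d ⬝ᵥ z) := by
    ext (i | i) <;> simp
  rw [hcomb, sumElim_dotProduct_sumElim, sumElim_dotProduct_sumElim]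
  have h1 : y ⬝ᵥ (Fᵀ *ᵥ z) = z ⬝ᵥ (F *ᵥ y) := by
    rw [dotProduct_mulVec, vecMul_transpose, dotProduct_comm]
  have h2 : (fun _ : Fin 1 => t) ⬝ᵥ (fun _ : Fin 1 => (δU - φ) * t + d ⬝ᵥ z)
      = t * ((δU - φ) * t + d ⬝ᵥ z) := by
    simp [dotProduct]
  rw [h2]
  simp only [dotProduct_add, add_dotProduct, dotProduct_smul, smul_eq_mul, smul_dotProduct, h1,
    dotProduct_comm d z, dotProduct_comm (t • d) z, dotProduct_comm z (F *ᵥ y)]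
  ring

lemma M3_herm (F : Matrix (Fin m) (Fin n) ℝ) (d : Fin m → ℝ) (δU φ : ℝ) : (M3 F d δU φ).IsHermitian := by
  rw [Matrix.IsHermitian, conjTranspose_eq_transpose_of_trivial]
  ext i j
  rcases i with (i | i) | i <;> rcases j with (j | j) | j <;>
    simp [M3, block3, fromBlocks, fromRows_apply_inl, fromRows_apply_inr, fromCols, rowV, colV, sc,
      Matrix.one_apply, Matrix.smul_apply, eq_comm]

lemma dself' {k : ℕ} (v : Fin k → ℝ) : 0 ≤ v ⬝ᵥ v :=
  Finset.sum_nonneg fun i _ => mul_self_nonneg _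

lemma M3_psd_iff (F : Matrix (Fin m) (Fin n) ℝ) (d : Fin m → ℝ) (δU φ : ℝ) :
    (M3 F d δU φ).PosSemidef ↔ ∀ (y : Fin n → ℝ) (t : ℝ),
      (F *ᵥ y + t • d) ⬝ᵥ (F *ᵥ y + t • d) ≤ φ * (y ⬝ᵥ y) + (δU - φ) * t ^ 2 := by
  constructor
  · intro hpsd y t
    have h := hpsd.dotProduct_mulVec_nonneg (Sum.elim (Sum.elim y (fun _ => t)) (-(F *ᵥ y + t • d)))
    rw [star_trivial, M3_quadform] at h
    simp only [neg_dotProduct, dotProduct_neg, neg_neg] at h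
    linarith
  · intro hq
    refine .of_dotProduct_mulVec_nonneg (M3_herm F d δU φ) fun x => ?_
    rw [star_trivial]
    have hx : x = Sum.elim (Sum.elim (fun i => x (Sum.inl (Sum.inl i)))
        (fun _ : Fin 1 => x (Sum.inl (Sum.inr 0)))) (fun j => x (Sum.inr j)) := by
      ext ((i | i) | i)
      · rfl
      · have h0 : i = 0 := Subsingleton.elim _ _
        subst h0; rfl
      · rfl
    rw [hx, M3_quadform]
    set y : Fin n → ℝ := fun i => x (Sum.inl (Sum.inl i)) with hy
    set t : ℝ := x (Sum.inl (Sum.inr 0)) with ht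
    set z : Fin m → ℝ := fun j => x (Sum.inr j) with hz
    set v : Fin m → ℝ := F *ᵥ y + t • d with hv
    have h1 := hq y t
    rw [← hv] at h1
    have h2 : 0 ≤ (z + v) ⬝ᵥ (z + v) := dself' _
    have h3 : (z + v) ⬝ᵥ (z + v) = z ⬝ᵥ z + 2 * (z ⬝ᵥ v) + v ⬝ᵥ v := by
      simp only [dotProduct_add, add_dotProduct, dotProduct_comm v z]
      ring
    rw [h3] at h2
    linarith

/-- The affine controller `κ(x) = F L⁻¹ (x − c) + l` maps `E(c, L⁻²)` into the closed
ball of radius `√δU` centered at `ū` iff there exists `φ ≥ 0` with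
`[[φI, 0, Fᵀ],[0, δU − φ, (l − ū)ᵀ],[F, l − ū, I]] ⪰ 0`. -/
theorem controller_input_ball_iff {n m : ℕ}
    (L : Matrix (Fin n) (Fin n) ℝ) (hL : L.PosDef)
    (c : Fin n → ℝ) (F : Matrix (Fin m) (Fin n) ℝ) (l ubar : Fin m → ℝ)
    (δU : ℝ) (hδU : 0 ≤ δU)
    (κ : (Fin n → ℝ) → (Fin m → ℝ))
    (hκ : ∀ x, κ x = (F * L⁻¹).mulVec (x - c) + l) :
    (∀ x ∈ Ellip c (L ^ 2)⁻¹, eunorm (κ x - ubar) ≤ Real.sqrt δU) ↔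
      ∃ φ : ℝ, 0 ≤ φ ∧
        (block3 (φ • (1 : Matrix (Fin n) (Fin n) ℝ)) 0 Fᵀ
                0 (sc (δU - φ)) (rowV (l - ubar))
                F (colV (l - ubar)) (1 : Matrix (Fin m) (Fin m) ℝ)).PosSemidef := by
  classical
  set d : Fin m → ℝ := l - ubar with hd
  have hLdet : IsUnit L.det := hL.det_pos.ne'.isUnit
  have hLT : Lᵀ = L := (conjTranspose_eq_transpose_of_trivial L).symm.trans hL.1
  have hquad : ∀ v : Fin n → ℝ, v ⬝ᵥ ((L ^ 2)⁻¹ *ᵥ v) = (L⁻¹ *ᵥ v) ⬝ᵥ (L⁻¹ *ᵥ v) := by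
    intro v
    have h2 : (L ^ 2)⁻¹ = L⁻¹ * L⁻¹ := by rw [pow_two, Matrix.mul_inv_rev]
    rw [h2, ← mulVec_mulVec, dotProduct_mulVec, ← mulVec_transpose, transpose_nonsing_inv, hLT]
  have heu : ∀ v : Fin m → ℝ, (eunorm v ≤ Real.sqrt δU ↔ v ⬝ᵥ v ≤ δU) := by
    intro v
    rw [eunorm, Real.sqrt_le_sqrt_iff hδU]
    have h3 : ∑ i, v i ^ 2 = v ⬝ᵥ v := by simp [dotProduct, sq]
    rw [h3]
  have hcond : (∀ x ∈ Ellip c (L ^ 2)⁻¹, eunorm (κ x - ubar) ≤ Real.sqrt δU) ↔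
      (∀ y : Fin n → ℝ, y ⬝ᵥ y ≤ 1 → (F *ᵥ y + d) ⬝ᵥ (F *ᵥ y + d) ≤ δU) := by
    constructor
    · intro H y hy
      have hx : (L *ᵥ y + c) ∈ Ellip c (L ^ 2)⁻¹ := by
        rw [Ellip, Set.mem_setOf_eq, add_sub_cancel_right, hquad, mulVec_mulVec,
          Matrix.nonsing_inv_mul L hLdet, Matrix.one_mulVec]
        exact hy
      have h2 := H _ hx
      rw [hκ, add_sub_cancel_right, add_sub_assoc, heu, mulVec_mulVec, Matrix.mul_assoc,
        Matrix.nonsing_inv_mul L hLdet, Matrix.mul_one] at h2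
      exact h2
    · intro H x hx
      rw [hκ, add_sub_assoc, heu]
      have h1 : (L⁻¹ *ᵥ (x - c)) ⬝ᵥ (L⁻¹ *ᵥ (x - c)) ≤ 1 := by
        rw [← hquad]; exact hx
      have h2 := H _ h1
      rw [mulVec_mulVec] at h2
      exact h2
  rw [hcond]
  constructor
  · intro H
    obtain ⟨φ, hφ, hq⟩ := slemma F d δU H
    exact ⟨φ, hφ, (M3_psd_iff F d δU φ).mpr hq⟩
  · rintro ⟨φ, hφ, hpsd⟩ y hy
    have hq := (M3_psd_iff F d δU φ).mp hpsd y 1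
    simp only [one_smul, one_pow, mul_one] at hq
    nlinarith [hq, hφ, hy]
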